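/- arXiv:1212.0407 — 2 statements merged into one kernel-verified Lean document; each statement's English description precedes it below -/
import Mathlib

section
/- If a tripartite state factorizes as ρ_{SBR} = ρ_{S R1} ⊗ |ψ_{B R2}⟩⟨ψ_{B R2}| with R = R1 ⊗ R2, then the entanglement of formation between SB and R is additive across the factors: E_F^{SB-R}(ρ_{SBR}) = E_F^{S-R1}(ρ_{S R1}) + E^{B-R2}(|ψ_{B R2}⟩), where the second term is the entanglement entropy of the pure state. -/
open Matrix BigOperators
open scoped Kronecker ComplexOrder

noncomputable section

/-- A density matrix: positive semidefinite with unit trace. -/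
def IsDensityMatrix {n : Type*} [Fintype n] (ρ : Matrix n n ℂ) : Prop :=
  ρ.PosSemidef ∧ ρ.trace = 1

/-- von Neumann entropy `S(ρ) = -tr(ρ log ρ)`, computed via the eigenvalues
(with the convention `0 log 0 = 0`); junk value `0` for non-Hermitian input. -/
noncomputable def vnEntropy {n : Type*} [Fintype n] [DecidableEq n]
    (ρ : Matrix n n ℂ) : ℝ :=
  if h : ρ.IsHermitian then -∑ i, h.eigenvalues i * Real.log (h.eigenvalues i) else 0

/-- Matrix logarithm of a Hermitian matrix (taken on the support / spectrum);
junk value `0` for non-Hermitian input. -/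
noncomputable def matLog {n : Type*} [Fintype n] [DecidableEq n]
    (ρ : Matrix n n ℂ) : Matrix n n ℂ :=
  if h : ρ.IsHermitian then
    (h.eigenvectorUnitary : Matrix n n ℂ) *
      Matrix.diagonal (fun i => (Real.log (h.eigenvalues i) : ℂ)) *
      star (h.eigenvectorUnitary : Matrix n n ℂ)
  else 0

/-- Quantum relative entropy `D(ρ‖σ) = tr[ρ (log ρ - log σ)]`. -/
noncomputable def relEntropy {n : Type*} [Fintype n] [DecidableEq n]
    (ρ σ : Matrix n n ℂ) : ℝ :=
  ((ρ * (matLog ρ - matLog σ)).trace).re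

/-- The rank-one projector `|ψ⟩⟨ψ|` associated with a vector `ψ`. -/
def pureState {n : Type*} (ψ : n → ℂ) : Matrix n n ℂ :=
  Matrix.vecMulVec ψ (star ψ)

/-- Partial trace over the first tensor factor. -/
noncomputable def trFst {a b : Type*} [Fintype a]
    (M : Matrix (a × b) (a × b) ℂ) : Matrix b b ℂ :=
  Matrix.of fun i j => ∑ k, M (k, i) (k, j)

/-- Partial trace over the second tensor factor. -/
noncomputable def trSnd {a b : Type*} [Fintype b]
    (M : Matrix (a × b) (a × b) ℂ) : Matrix a a ℂ :=
  Matrix.of fun i j => ∑ k, M (i, k) (j, k)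

/-- `ψ` is a unit vector. -/
def IsUnitVec {n : Type*} [Fintype n] (ψ : n → ℂ) : Prop :=
  ∑ i, Complex.normSq (ψ i) = 1

/-- Entanglement entropy of a bipartite pure state:
the entropy of the reduced state on the first factor. -/
noncomputable def entEntropy {a b : Type*} [Fintype a] [Fintype b] [DecidableEq a]
    (ψ : a × b → ℂ) : ℝ :=
  vnEntropy (trSnd (pureState ψ))

/-- Entanglement of formation: infimum of the average pure-state entanglement
entropy over all finite pure-state decompositions of `ρ`. -/
noncomputable def entFormation {a b : Type*} [Fintype a] [Fintype b]
    [DecidableEq a] (ρ : Matrix (a × b) (a × b) ℂ) : ℝ :=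
  sInf { x | ∃ (m : ℕ) (q : Fin m → ℝ) (φ : Fin m → a × b → ℂ),
    (∀ j, 0 ≤ q j) ∧ (∑ j, q j = 1) ∧ (∀ j, IsUnitVec (φ j)) ∧
    ρ = ∑ j, (q j : ℂ) • pureState (φ j) ∧
    x = ∑ j, q j * entEntropy (φ j) }

/-- `e` is an orthonormal basis (given as a family of vectors) of the space `n → ℂ`. -/
def IsONBasis {ι n : Type*} [Fintype ι] [Fintype n] [DecidableEq ι] [DecidableEq n]
    (e : ι → n → ℂ) : Prop :=
  (∀ a b, ∑ x, (starRingEnd ℂ) (e a x) * e b x = if a = b then 1 else 0) ∧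
  (∀ x y, ∑ a, e a x * (starRingEnd ℂ) (e a y) = if x = y then 1 else 0)

/-- The binary entropy function. -/
noncomputable def binEnt (x : ℝ) : ℝ :=
  -(x * Real.log x) - (1 - x) * Real.log (1 - x)

end


section AuxEFP

open Polynomial in
private lemma auxSmulOneSubConj {n : Type*} [Fintype n] [DecidableEq n] {W : Matrix n n ℂ}
    (hW : W ∈ Matrix.unitaryGroup n ℂ) (d : n → ℂ) (x : ℂ) :
    x • (1 : Matrix n n ℂ) - W * Matrix.diagonal d * Wᴴ
      = W * Matrix.diagonal (fun i => x - d i) * Wᴴ := by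
  have h1 : W * Wᴴ = 1 := (Matrix.mem_unitaryGroup_iff).mp hW
  have : (Matrix.diagonal (fun i => x - d i) : Matrix n n ℂ)
      = x • (1 : Matrix n n ℂ) - Matrix.diagonal d := by
    rw [smul_one_eq_diagonal, diagonal_sub]
  rw [this, Matrix.mul_sub, Matrix.sub_mul, Matrix.mul_smul, mul_one, Matrix.smul_mul, h1,
    smul_one_eq_diagonal]

private lemma auxConjDiagDet {n : Type*} [Fintype n] [DecidableEq n] {W : Matrix n n ℂ}
    (hW : W ∈ Matrix.unitaryGroup n ℂ) (d : n → ℂ) (x : ℂ) :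
    (x • (1 : Matrix n n ℂ) - W * Matrix.diagonal d * Wᴴ).det = ∏ i, (x - d i) := by
  have h1 : W * Wᴴ = 1 := (Matrix.mem_unitaryGroup_iff).mp hW
  rw [auxSmulOneSubConj hW, det_mul, det_mul, det_diagonal]
  rw [mul_comm W.det, mul_assoc, ← det_mul, h1, det_one, mul_one]

open Polynomial in
private lemma auxEigMultisetEq {n : Type*} [Fintype n] [DecidableEq n] {ρ : Matrix n n ℂ}
    {W : Matrix n n ℂ} (hW : W ∈ Matrix.unitaryGroup n ℂ) (d : n → ℝ)
    (hρ : ρ = W * Matrix.diagonal (fun i => (d i : ℂ)) * Wᴴ) (h : ρ.IsHermitian) :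
    (Finset.univ.val.map fun i => ((h.eigenvalues i : ℂ))) =
      (Finset.univ.val.map fun i => ((d i : ℂ))) := by
  have hU : ρ = (h.eigenvectorUnitary : Matrix n n ℂ) *
      Matrix.diagonal (fun i => (h.eigenvalues i : ℂ)) *
      ((h.eigenvectorUnitary : Matrix n n ℂ))ᴴ := by
    simpa [Matrix.star_eq_conjTranspose, Function.comp_def] using h.spectral_theorem
  have key : ∀ x : ℂ, ∏ i, (x - (h.eigenvalues i : ℂ)) = ∏ i, (x - (d i : ℂ)) := by
    intro x
    have e1 := auxConjDiagDet (W := (h.eigenvectorUnitary : Matrix n n ℂ))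
      (h.eigenvectorUnitary).2 (fun i => (h.eigenvalues i : ℂ)) x
    have e2 := auxConjDiagDet hW (fun i => (d i : ℂ)) x
    rw [← hU] at e1
    rw [← hρ] at e2
    rw [← e1, ← e2]
  have hpq : (∏ i : n, (X - C ((h.eigenvalues i : ℂ)))) = ∏ i : n, (X - C ((d i : ℂ))) := by
    apply Polynomial.funext
    intro x
    simp only [eval_prod, eval_sub, eval_X, eval_C]
    exact key x
  have r1 := Polynomial.roots_multiset_prod_X_sub_C
    (Finset.univ.val.map fun i => ((h.eigenvalues i : ℂ)))
  have r2 := Polynomial.roots_multiset_prod_X_sub_C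
    (Finset.univ.val.map fun i => ((d i : ℂ)))
  rw [Multiset.map_map] at r1 r2
  rw [← r1, ← r2]
  have : (Finset.univ.val.map fun i => X - C ((h.eigenvalues i : ℂ))).prod
      = (Finset.univ.val.map fun i => X - C ((d i : ℂ))).prod := hpq
  simp only [Function.comp]
  rw [this]

private lemma auxVnEntropyDiag {n : Type*} [Fintype n] [DecidableEq n] {W : Matrix n n ℂ}
    (hW : W ∈ Matrix.unitaryGroup n ℂ) (d : n → ℝ) {ρ : Matrix n n ℂ}
    (hρ : ρ = W * Matrix.diagonal (fun i => (d i : ℂ)) * Wᴴ) :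
    vnEntropy ρ = -∑ i, d i * Real.log (d i) := by
  have h : ρ.IsHermitian := by
    rw [hρ]; unfold Matrix.IsHermitian
    rw [conjTranspose_mul, conjTranspose_mul, conjTranspose_conjTranspose, diagonal_conjTranspose]
    rw [mul_assoc]
    congr 2
    funext i
    simp [Pi.star_def]
  have hm := auxEigMultisetEq hW d hρ h
  rw [vnEntropy, dif_pos h]
  have h2 := congrArg (fun m : Multiset ℂ => (m.map (fun z : ℂ => z.re * Real.log z.re)).sum) hm
  simp only [Multiset.map_map, Function.comp, Complex.ofReal_re] at h2
  exact congrArg Neg.neg h2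

private lemma auxKronConjTranspose {a b : Type*} [Fintype a] [Fintype b]
    (A : Matrix a a ℂ) (B : Matrix b b ℂ) : (A ⊗ₖ B)ᴴ = Aᴴ ⊗ₖ Bᴴ := by
  ext ⟨i, j⟩ ⟨k, l⟩
  simp [conjTranspose_apply, Matrix.kroneckerMap_apply, mul_comm]

private lemma auxKronUnitary {a b : Type*} [Fintype a] [Fintype b] [DecidableEq a] [DecidableEq b]
    {U : Matrix a a ℂ} {V : Matrix b b ℂ} (hU : U ∈ Matrix.unitaryGroup a ℂ)
    (hV : V ∈ Matrix.unitaryGroup b ℂ) : U ⊗ₖ V ∈ Matrix.unitaryGroup (a × b) ℂ := by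
  rw [Matrix.mem_unitaryGroup_iff] at *
  have : star (U ⊗ₖ V) = (star U) ⊗ₖ (star V) := auxKronConjTranspose U V
  rw [this, ← Matrix.mul_kronecker_mul, hU, hV, Matrix.one_kronecker_one]

private lemma auxSumEigTrace {n : Type*} [Fintype n] [DecidableEq n] {ρ : Matrix n n ℂ}
    (h : ρ.IsHermitian) : (∑ i, (h.eigenvalues i : ℂ)) = ρ.trace := by
  have hU : ρ = (h.eigenvectorUnitary : Matrix n n ℂ) *
      Matrix.diagonal (fun i => (h.eigenvalues i : ℂ)) *
      ((h.eigenvectorUnitary : Matrix n n ℂ))ᴴ := by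
    simpa [Matrix.star_eq_conjTranspose, Function.comp_def] using h.spectral_theorem
  conv_rhs => rw [hU]
  rw [Matrix.trace_mul_cycle]
  have h1 : ((h.eigenvectorUnitary : Matrix n n ℂ))ᴴ * (h.eigenvectorUnitary : Matrix n n ℂ) = 1 :=
    Matrix.UnitaryGroup.star_mul_self h.eigenvectorUnitary
  rw [h1, one_mul, Matrix.trace_diagonal]

private lemma auxXYLogXY (x y : ℝ) (hx : 0 ≤ x) (hy : 0 ≤ y) :
    x * y * Real.log (x * y) = y * (x * Real.log x) + x * (y * Real.log y) := by
  rcases eq_or_lt_of_le hx with h | h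
  · simp [← h]
  rcases eq_or_lt_of_le hy with h' | h'
  · simp [← h']
  rw [Real.log_mul (ne_of_gt h) (ne_of_gt h')]
  ring

private lemma auxEntSumProd {a b : Type*} [Fintype a] [Fintype b] (lam : a → ℝ) (mu : b → ℝ)
    (hl : ∀ i, 0 ≤ lam i) (hm : ∀ j, 0 ≤ mu j) (hsl : ∑ i, lam i = 1) (hsm : ∑ j, mu j = 1) :
    -∑ p : a × b, (lam p.1 * mu p.2) * Real.log (lam p.1 * mu p.2)
      = (-∑ i, lam i * Real.log (lam i)) + (-∑ j, mu j * Real.log (mu j)) := by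
  rw [Fintype.sum_prod_type]
  have h1 : ∀ i, ∑ j, (lam i * mu j) * Real.log (lam i * mu j)
      = (lam i * Real.log (lam i)) + lam i * ∑ j, mu j * Real.log (mu j) := by
    intro i
    calc ∑ j, (lam i * mu j) * Real.log (lam i * mu j)
        = ∑ j, (mu j * (lam i * Real.log (lam i)) + lam i * (mu j * Real.log (mu j))) :=
          Finset.sum_congr rfl fun j _ => auxXYLogXY _ _ (hl i) (hm j)
      _ = (∑ j, mu j) * (lam i * Real.log (lam i)) + lam i * ∑ j, mu j * Real.log (mu j) := by
          rw [Finset.sum_add_distrib, ← Finset.sum_mul, ← Finset.mul_sum]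
      _ = (lam i * Real.log (lam i)) + lam i * ∑ j, mu j * Real.log (mu j) := by
          rw [hsm, one_mul]
  calc -∑ i, ∑ j, (lam i * mu j) * Real.log (lam i * mu j)
      = -∑ i, ((lam i * Real.log (lam i)) + lam i * ∑ j, mu j * Real.log (mu j)) := by
        rw [Finset.sum_congr rfl fun i _ => h1 i]
    _ = -((∑ i, lam i * Real.log (lam i)) + (∑ i, lam i) * ∑ j, mu j * Real.log (mu j)) := by
        rw [Finset.sum_add_distrib, ← Finset.sum_mul]
    _ = _ := by rw [hsl, one_mul]; ring

private lemma auxEigSumOne {n : Type*} [Fintype n] [DecidableEq n] {ρ : Matrix n n ℂ}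
    (h : ρ.IsHermitian) (ht : ρ.trace = 1) : ∑ i, h.eigenvalues i = 1 := by
  have := auxSumEigTrace h
  rw [ht] at this
  exact_mod_cast this

private lemma auxVnEntropyKron {a b : Type*} [Fintype a] [Fintype b] [DecidableEq a] [DecidableEq b]
    {A : Matrix a a ℂ} {B : Matrix b b ℂ} (hA : A.PosSemidef) (htA : A.trace = 1)
    (hB : B.PosSemidef) (htB : B.trace = 1) :
    vnEntropy (A ⊗ₖ B) = vnEntropy A + vnEntropy B := by
  have hUA : A = (hA.1.eigenvectorUnitary : Matrix a a ℂ) *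
      Matrix.diagonal (fun i => (hA.1.eigenvalues i : ℂ)) *
      ((hA.1.eigenvectorUnitary : Matrix a a ℂ))ᴴ := by
    simpa [Matrix.star_eq_conjTranspose, Function.comp_def] using hA.1.spectral_theorem
  have hUB : B = (hB.1.eigenvectorUnitary : Matrix b b ℂ) *
      Matrix.diagonal (fun i => (hB.1.eigenvalues i : ℂ)) *
      ((hB.1.eigenvectorUnitary : Matrix b b ℂ))ᴴ := by
    simpa [Matrix.star_eq_conjTranspose, Function.comp_def] using hB.1.spectral_theorem
  set U := (hA.1.eigenvectorUnitary : Matrix a a ℂ)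
  set V := (hB.1.eigenvectorUnitary : Matrix b b ℂ)
  have hkr : A ⊗ₖ B = (U ⊗ₖ V) *
      Matrix.diagonal (fun p : a × b => ((hA.1.eigenvalues p.1 * hB.1.eigenvalues p.2 : ℝ) : ℂ)) *
      (U ⊗ₖ V)ᴴ := by
    conv_lhs => rw [hUA, hUB]
    rw [Matrix.mul_kronecker_mul, Matrix.mul_kronecker_mul, auxKronConjTranspose,
      Matrix.diagonal_kronecker_diagonal]
    congr 2
    funext p
    push_cast
    rfl
  rw [auxVnEntropyDiag (auxKronUnitary hA.1.eigenvectorUnitary.2 hB.1.eigenvectorUnitary.2) _ hkr,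
    auxVnEntropyDiag hA.1.eigenvectorUnitary.2 _ hUA, auxVnEntropyDiag hB.1.eigenvectorUnitary.2 _ hUB]
  exact auxEntSumProd _ _ hA.eigenvalues_nonneg hB.eigenvalues_nonneg
    (auxEigSumOne hA.1 htA) (auxEigSumOne hB.1 htB)

private lemma auxVnEntropyNonneg {n : Type*} [Fintype n] [DecidableEq n] {ρ : Matrix n n ℂ}
    (hρ : ρ.PosSemidef) (ht : ρ.trace = 1) : 0 ≤ vnEntropy ρ := by
  rw [vnEntropy, dif_pos hρ.1, neg_nonneg]
  have hsum : ∑ i, hρ.1.eigenvalues i = 1 := auxEigSumOne hρ.1 ht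
  refine Finset.sum_nonpos fun i _ => ?_
  have h0 := hρ.eigenvalues_nonneg i
  have h1 : hρ.1.eigenvalues i ≤ 1 := by
    rw [← hsum]
    exact Finset.single_le_sum (fun j _ => hρ.eigenvalues_nonneg j) (Finset.mem_univ i)
  exact mul_nonpos_of_nonneg_of_nonpos h0 (Real.log_nonpos h0 h1)

private lemma auxSumProd {α β M : Type*} [Fintype α] [Fintype β] [AddCommMonoid M] (f : α × β → M) :
    ∑ x : α, ∑ y : β, f (x, y) = ∑ p : α × β, f p := (Fintype.sum_prod_type (f := f)).symm

private lemma auxPureStateApply {n : Type*} (ψ : n → ℂ) (i j : n) :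
    pureState ψ i j = ψ i * (starRingEnd ℂ) (ψ j) := rfl

private lemma auxTrSndPureStateApply {a b : Type*} [Fintype b] (φ : a × b → ℂ) (i j : a) :
    trSnd (pureState φ) i j = ∑ k, φ (i, k) * (starRingEnd ℂ) (φ (j, k)) := rfl

private lemma auxTrSndPureStatePosSemidef {a b : Type*} [Fintype a] [Fintype b]
    (φ : a × b → ℂ) : (trSnd (pureState φ)).PosSemidef := by
  rw [Matrix.posSemidef_iff_dotProduct_mulVec]
  constructor
  · ext i j
    simp only [conjTranspose_apply, auxTrSndPureStateApply, star_sum, star_mul', RCLike.star_def,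
      Complex.conj_conj]
    exact Finset.sum_congr rfl fun k _ => mul_comm _ _
  · intro x
    have key : dotProduct (star x) ((trSnd (pureState φ)) *ᵥ x)
        = ∑ k, ((Complex.normSq (∑ i, (starRingEnd ℂ) (x i) * φ (i, k)) : ℝ) : ℂ) := by
      calc dotProduct (star x) ((trSnd (pureState φ)) *ᵥ x)
          = ∑ i, ∑ j, ∑ k, ((starRingEnd ℂ) (x i) * φ (i, k)) * (x j * (starRingEnd ℂ) (φ (j, k))) := by
            simp only [dotProduct, mulVec, Pi.star_apply, RCLike.star_def, auxTrSndPureStateApply,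
              dotProduct, Finset.mul_sum, Finset.sum_mul]
            refine Finset.sum_congr rfl fun i _ => Finset.sum_congr rfl fun j _ =>
              Finset.sum_congr rfl fun k _ => by ring
        _ = ∑ i, ∑ k, ∑ j, ((starRingEnd ℂ) (x i) * φ (i, k)) * (x j * (starRingEnd ℂ) (φ (j, k))) :=
            Finset.sum_congr rfl fun i _ => Finset.sum_comm
        _ = ∑ k, ∑ i, ∑ j, ((starRingEnd ℂ) (x i) * φ (i, k)) * (x j * (starRingEnd ℂ) (φ (j, k))) :=
            Finset.sum_comm
        _ = ∑ k, (∑ i, (starRingEnd ℂ) (x i) * φ (i, k)) * (∑ j, x j * (starRingEnd ℂ) (φ (j, k))) :=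
            Finset.sum_congr rfl fun k _ => (Finset.sum_mul_sum _ _ _ _).symm
        _ = _ := by
            refine Finset.sum_congr rfl fun k _ => ?_
            rw [← Complex.mul_conj]
            congr 1
            rw [map_sum]
            exact Finset.sum_congr rfl fun i _ => by simp [mul_comm]
    rw [key]
    exact Finset.sum_nonneg fun k _ => by
      rw [Complex.zero_le_real]
      exact Complex.normSq_nonneg _

private lemma auxTrSndPureStateTrace {a b : Type*} [Fintype a] [Fintype b]
    (φ : a × b → ℂ) (h : IsUnitVec φ) : (trSnd (pureState φ)).trace = 1 := by
  rw [Matrix.trace]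
  simp only [diag_apply, auxTrSndPureStateApply]
  rw [show (∑ x : a, ∑ k : b, φ (x, k) * (starRingEnd ℂ) (φ (x, k)))
      = ∑ p : a × b, φ p * (starRingEnd ℂ) (φ p) from
    auxSumProd (fun p : a × b => φ p * (starRingEnd ℂ) (φ p))]
  rw [show ∑ p : a × b, φ p * (starRingEnd ℂ) (φ p) = ∑ p : a × b, ((Complex.normSq (φ p) : ℝ) : ℂ) from
    Finset.sum_congr rfl fun p _ => Complex.mul_conj _]
  rw [← Complex.ofReal_sum, h]
  norm_num

/-- product wavefunction on the interleaved index order -/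
private def prodVec {s r1 b r2 : Type*} (φ : s × r1 → ℂ) (ψ : b × r2 → ℂ) :
    (s × b) × (r1 × r2) → ℂ :=
  fun z => φ (z.1.1, z.2.1) * ψ (z.1.2, z.2.2)

private lemma auxNormSqSumProdVec {s r1 b r2 : Type*} [Fintype s] [Fintype r1] [Fintype b]
    [Fintype r2] (φ : s × r1 → ℂ) (ψ : b × r2 → ℂ) :
    ∑ z, Complex.normSq (prodVec φ ψ z)
      = (∑ p, Complex.normSq (φ p)) * (∑ p, Complex.normSq (ψ p)) := by
  unfold prodVec
  have h1 : ∀ z : (s × b) × (r1 × r2), Complex.normSq (φ (z.1.1, z.2.1) * ψ (z.1.2, z.2.2))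
      = Complex.normSq (φ (z.1.1, z.2.1)) * Complex.normSq (ψ (z.1.2, z.2.2)) :=
    fun z => Complex.normSq_mul _ _
  rw [Finset.sum_congr rfl fun z _ => h1 z]
  rw [Fintype.sum_prod_type]
  have swap : ∀ p : s × b,
      ∑ k : r1 × r2, Complex.normSq (φ (p.1, k.1)) * Complex.normSq (ψ (p.2, k.2))
      = (∑ u : r1, Complex.normSq (φ (p.1, u))) * (∑ v : r2, Complex.normSq (ψ (p.2, v))) := by
    intro p
    rw [Fintype.sum_prod_type, Finset.sum_mul_sum]
  rw [Finset.sum_congr rfl fun p _ => swap p]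
  rw [Fintype.sum_prod_type]
  rw [Finset.sum_congr rfl fun x _ =>
    (Finset.mul_sum Finset.univ (fun y : b => ∑ v : r2, Complex.normSq (ψ (y, v)))
      (∑ u : r1, Complex.normSq (φ (x, u)))).symm]
  rw [← Finset.sum_mul]
  rw [auxSumProd (fun p : s × r1 => Complex.normSq (φ p)),
    auxSumProd (fun p : b × r2 => Complex.normSq (ψ p))]

private lemma auxProdVecUnit {s r1 b r2 : Type*} [Fintype s] [Fintype r1] [Fintype b] [Fintype r2]
    {φ : s × r1 → ℂ} {ψ : b × r2 → ℂ} (hφ : IsUnitVec φ) (hψ : IsUnitVec ψ) :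
    IsUnitVec (prodVec φ ψ) := by
  unfold IsUnitVec at *
  rw [auxNormSqSumProdVec, hφ, hψ, mul_one]

private lemma auxUnitOfProdVec {s r1 b r2 : Type*} [Fintype s] [Fintype r1] [Fintype b] [Fintype r2]
    {φ : s × r1 → ℂ} {ψ : b × r2 → ℂ} (hψ : IsUnitVec ψ) (h : IsUnitVec (prodVec φ ψ)) :
    IsUnitVec φ := by
  unfold IsUnitVec at *
  rw [auxNormSqSumProdVec, hψ, mul_one] at h
  exact h

private lemma auxTrSndPureStateProdVec {s r1 b r2 : Type*} [Fintype s] [Fintype r1] [Fintype b]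
    [Fintype r2] (φ : s × r1 → ℂ) (ψ : b × r2 → ℂ) :
    trSnd (pureState (prodVec φ ψ)) = (trSnd (pureState φ)) ⊗ₖ (trSnd (pureState ψ)) := by
  ext i j
  rw [auxTrSndPureStateApply]
  show _ = (trSnd (pureState φ)) i.1 j.1 * (trSnd (pureState ψ)) i.2 j.2
  rw [auxTrSndPureStateApply, auxTrSndPureStateApply, Finset.sum_mul_sum]
  rw [auxSumProd (fun k : r1 × r2 => φ (i.1, k.1) * (starRingEnd ℂ) (φ (j.1, k.1)) *
    (ψ (i.2, k.2) * (starRingEnd ℂ) (ψ (j.2, k.2))))]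
  refine Finset.sum_congr rfl fun k _ => ?_
  unfold prodVec
  rw [map_mul (starRingEnd ℂ)]
  ring

private lemma auxEntEntropyNonneg {a b : Type*} [Fintype a] [Fintype b] [DecidableEq a]
    {φ : a × b → ℂ} (hφ : IsUnitVec φ) : 0 ≤ entEntropy φ :=
  auxVnEntropyNonneg (auxTrSndPureStatePosSemidef φ) (auxTrSndPureStateTrace φ hφ)

private lemma auxEntEntropyProdVec {s r1 b r2 : Type*} [Fintype s] [Fintype r1] [Fintype b]
    [Fintype r2] [DecidableEq s] [DecidableEq b]
    {φ : s × r1 → ℂ} {ψ : b × r2 → ℂ} (hφ : IsUnitVec φ) (hψ : IsUnitVec ψ) :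
    entEntropy (prodVec φ ψ) = entEntropy φ + entEntropy ψ := by
  unfold entEntropy
  rw [auxTrSndPureStateProdVec]
  exact auxVnEntropyKron (auxTrSndPureStatePosSemidef φ) (auxTrSndPureStateTrace φ hφ)
    (auxTrSndPureStatePosSemidef ψ) (auxTrSndPureStateTrace ψ hψ)

private lemma auxDensityDecomp {n : Type*} [Fintype n] [DecidableEq n] {ρ : Matrix n n ℂ}
    (hρ : IsDensityMatrix ρ) :
    ∃ (q : Fin (Fintype.card n) → ℝ) (φ : Fin (Fintype.card n) → n → ℂ),
      (∀ j, 0 ≤ q j) ∧ (∑ j, q j = 1) ∧ (∀ j, IsUnitVec (φ j)) ∧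
      ρ = ∑ j, (q j : ℂ) • pureState (φ j) := by
  obtain ⟨hpsd, htr⟩ := hρ
  have h := hpsd.1
  set U := (h.eigenvectorUnitary : Matrix n n ℂ) with hUdef
  have hU : ρ = U * Matrix.diagonal (fun i => (h.eigenvalues i : ℂ)) * Uᴴ := by
    simpa [Matrix.star_eq_conjTranspose, Function.comp_def] using h.spectral_theorem
  have hcols : ∀ i : n, ∑ x, Complex.normSq (U x i) = 1 := by
    intro i
    have h1 : Uᴴ * U = 1 := Matrix.UnitaryGroup.star_mul_self h.eigenvectorUnitary
    have h2 := congrFun (congrFun h1 i) i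
    simp only [Matrix.mul_apply, Matrix.conjTranspose_apply, Matrix.one_apply_eq] at h2
    have heq : ∀ x, star (U x i) * U x i = ((Complex.normSq (U x i) : ℝ) : ℂ) := by
      intro x; rw [mul_comm]; exact Complex.mul_conj _
    rw [Finset.sum_congr rfl fun x _ => heq x, ← Complex.ofReal_sum] at h2
    exact_mod_cast h2
  have hdecomp : ρ = ∑ i : n, ((h.eigenvalues i : ℝ) : ℂ) • pureState (fun x => U x i) := by
    conv_lhs => rw [hU]
    ext x y
    simp only [Matrix.sum_apply, Matrix.smul_apply, Matrix.mul_apply, Matrix.diagonal_apply,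
      Matrix.conjTranspose_apply, smul_eq_mul]
    refine Finset.sum_congr rfl fun i _ => ?_
    simp only [mul_ite, mul_zero, Finset.sum_ite_eq, Finset.sum_ite_eq', Finset.mem_univ, if_true]
    show U x i * (h.eigenvalues i : ℂ) * star (U y i) = _
    simp only [pureState, Matrix.vecMulVec_apply, Pi.star_apply]
    ring
  let e := (Fintype.equivFin n).symm
  refine ⟨fun j => h.eigenvalues (e j), fun j x => U x (e j), fun j => hpsd.eigenvalues_nonneg _,
    ?_, fun j => hcols (e j), ?_⟩
  · rw [Equiv.sum_comp e (fun i => h.eigenvalues i)]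
    exact auxEigSumOne h htr
  · exact hdecomp.trans (Equiv.sum_comp e
      (fun i => ((h.eigenvalues i : ℝ) : ℂ) • pureState (fun x => U x i))).symm

private lemma auxSumMix {s b r1 r2 M : Type*} [Fintype s] [Fintype b] [Fintype r1] [Fintype r2]
    [AddCommMonoid M] (f : (s × b) × (r1 × r2) → M) :
    ∑ z, f z = ∑ x : s × r1, ∑ y : b × r2, f ((x.1, y.1), (x.2, y.2)) := by
  rw [← Equiv.sum_comp (Equiv.prodProdProdComm s r1 b r2) f, Fintype.sum_prod_type]
  rfl

private lemma auxUnitSumConj {n : Type*} [Fintype n] {ψ : n → ℂ} (hψ : IsUnitVec ψ) :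
    ∑ y, (starRingEnd ℂ) (ψ y) * ψ y = 1 := by
  have h : ∀ y, (starRingEnd ℂ) (ψ y) * ψ y = ((Complex.normSq (ψ y) : ℝ) : ℂ) := fun y => by
    rw [mul_comm]; exact Complex.mul_conj _
  rw [Finset.sum_congr rfl fun y _ => h y, ← Complex.ofReal_sum, hψ, Complex.ofReal_one]

private lemma auxExistsUnitVec (n : Type*) [Fintype n] [DecidableEq n] [Nonempty n] :
    ∃ φ : n → ℂ, IsUnitVec φ := by
  refine ⟨fun x => if x = Classical.arbitrary n then 1 else 0, ?_⟩
  unfold IsUnitVec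
  rw [Finset.sum_congr rfl fun x _ => show Complex.normSq (if x = Classical.arbitrary n
    then (1:ℂ) else 0) = if x = Classical.arbitrary n then (1:ℝ) else 0 from by split <;> simp]
  simp

private lemma auxDecompFactor {s b r1 r2 : Type*} [Fintype s] [Fintype b] [Fintype r1] [Fintype r2]
    [DecidableEq s] [DecidableEq r1]
    (ρ : Matrix (s × r1) (s × r1) ℂ) (ψ : b × r2 → ℂ) (hψ : IsUnitVec ψ)
    {m : ℕ} (q : Fin m → ℝ) (χ : Fin m → (s × b) × (r1 × r2) → ℂ) (hq : ∀ j, 0 ≤ q j)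
    (hsum : Matrix.submatrix (ρ ⊗ₖ pureState ψ)
        (fun z : (s × b) × (r1 × r2) => ((z.1.1, z.2.1), (z.1.2, z.2.2)))
        (fun z : (s × b) × (r1 × r2) => ((z.1.1, z.2.1), (z.1.2, z.2.2)))
      = ∑ j, (q j : ℂ) • pureState (χ j))
    (j0 : Fin m) (hj0 : 0 < q j0) (x0 : s × r1) (y : b × r2) :
    χ j0 ((x0.1, y.1), (x0.2, y.2))
      = (∑ y', (starRingEnd ℂ) (ψ y') * χ j0 ((x0.1, y'.1), (x0.2, y'.2))) * ψ y := by
  set M := Matrix.submatrix (ρ ⊗ₖ pureState ψ)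
        (fun z : (s × b) × (r1 × r2) => ((z.1.1, z.2.1), (z.1.2, z.2.2)))
        (fun z : (s × b) × (r1 × r2) => ((z.1.1, z.2.1), (z.1.2, z.2.2))) with hM
  have entry : ∀ z z', M z z' = ρ (z.1.1, z.2.1) (z'.1.1, z'.2.1) *
      (ψ (z.1.2, z.2.2) * (starRingEnd ℂ) (ψ (z'.1.2, z'.2.2))) := fun _ _ => rfl
  have entry2 : ∀ z z', M z z' = ∑ j, (q j : ℂ) * (χ j z * (starRingEnd ℂ) (χ j z')) := by
    intro z z'
    have h := congrFun (congrFun hsum z) z'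
    rw [h, Matrix.sum_apply]
    exact Finset.sum_congr rfl fun j _ => by
      simp only [Matrix.smul_apply, smul_eq_mul]
      rfl
  set φ0 := ∑ y' : b × r2, (starRingEnd ℂ) (ψ y') * χ j0 ((x0.1, y'.1), (x0.2, y'.2)) with hφ0
  set η : b × r2 → ℂ := fun w => χ j0 ((x0.1, w.1), (x0.2, w.2)) - φ0 * ψ w with hη
  suffices hzero : ∀ w, η w = 0 by
    have := hzero y
    rw [hη] at this
    simpa [sub_eq_zero] using this
  have hB : ∑ w : b × r2, (starRingEnd ℂ) (ψ w) * η w = 0 := by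
    simp only [hη, mul_sub]
    rw [Finset.sum_sub_distrib]
    have h2 : ∑ w : b × r2, (starRingEnd ℂ) (ψ w) * (φ0 * ψ w)
        = φ0 * ∑ w : b × r2, (starRingEnd ℂ) (ψ w) * ψ w := by
      rw [Finset.mul_sum]; exact Finset.sum_congr rfl fun w _ => by ring
    rw [h2, auxUnitSumConj hψ, mul_one]
    exact sub_self _
  have hB' : ∑ w : b × r2, (starRingEnd ℂ) (η w) * ψ w = 0 := by
    have h := congrArg (starRingEnd ℂ) hB
    rw [map_sum, map_zero] at h
    rw [← h]
    exact Finset.sum_congr rfl fun w _ => by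
      rw [_root_.map_mul, Complex.conj_conj]; ring
  set v : (s × b) × (r1 × r2) → ℂ :=
    fun z => (if (z.1.1, z.2.1) = x0 then (1 : ℂ) else 0) * η (z.1.2, z.2.2) with hv
  set S : ℂ := ∑ z : (s × b) × (r1 × r2), ∑ z' : (s × b) × (r1 × r2),
    (starRingEnd ℂ) (v z) * (M z z' * v z') with hS
  have inner0 : ∀ z, ∑ z', M z z' * v z' = 0 := by
    intro z
    rw [auxSumMix (fun z' => M z z' * v z')]
    have hrow : ∀ x' : s × r1,
        ∑ y' : b × r2, M z ((x'.1, y'.1), (x'.2, y'.2)) * v ((x'.1, y'.1), (x'.2, y'.2))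
        = (ρ (z.1.1, z.2.1) x' * ψ (z.1.2, z.2.2) * (if (x'.1, x'.2) = x0 then (1:ℂ) else 0)) *
          ∑ w, (starRingEnd ℂ) (ψ w) * η w := by
      intro x'
      rw [Finset.mul_sum]
      refine Finset.sum_congr rfl fun y' _ => ?_
      rw [entry]
      simp only [hv]
      ring
    rw [Finset.sum_congr rfl fun x' _ => hrow x']
    rw [Finset.sum_congr rfl fun x' _ => by rw [hB, mul_zero]]
    exact Finset.sum_const_zero
  have hS0 : S = 0 := by
    rw [hS]
    rw [Finset.sum_congr rfl fun z _ => (Finset.mul_sum _ _ _).symm]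
    rw [Finset.sum_congr rfl fun z _ => by rw [inner0 z, mul_zero]]
    exact Finset.sum_const_zero
  set C : Fin m → ℂ := fun j => ∑ z, (starRingEnd ℂ) (v z) * χ j z with hC
  have hSway2 : S = ∑ j, (q j : ℂ) * (C j * (starRingEnd ℂ) (C j)) := by
    rw [hS]
    have h1 : ∀ z z', (starRingEnd ℂ) (v z) * (M z z' * v z')
        = ∑ j, (q j : ℂ) * (((starRingEnd ℂ) (v z) * χ j z) * ((starRingEnd ℂ) (χ j z') * v z')) := by
      intro z z'
      rw [entry2 z z', Finset.sum_mul, Finset.mul_sum]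
      exact Finset.sum_congr rfl fun j _ => by ring
    rw [Finset.sum_congr rfl fun z _ => Finset.sum_congr rfl fun z' _ => h1 z z']
    rw [Finset.sum_congr rfl fun z _ => Finset.sum_comm]
    rw [Finset.sum_comm]
    refine Finset.sum_congr rfl fun j _ => ?_
    have conjC : (starRingEnd ℂ) (C j) = ∑ z', (starRingEnd ℂ) (χ j z') * v z' := by
      rw [show C j = ∑ z, (starRingEnd ℂ) (v z) * χ j z from congrFun hC j]
      rw [map_sum]
      refine Finset.sum_congr rfl fun z _ => ?_
      rw [_root_.map_mul, Complex.conj_conj]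
      exact mul_comm _ _
    rw [conjC, show C j = ∑ z, (starRingEnd ℂ) (v z) * χ j z from congrFun hC j,
      Finset.sum_mul_sum, Finset.mul_sum]
    refine Finset.sum_congr rfl fun z _ => ?_
    rw [Finset.mul_sum]
  have hCj0 : C j0 = 0 := by
    have hreal : ∀ j, (q j : ℂ) * (C j * (starRingEnd ℂ) (C j))
        = ((q j * Complex.normSq (C j) : ℝ) : ℂ) := by
      intro j
      rw [Complex.mul_conj]
      push_cast
      ring
    have h := hS0.symm.trans hSway2
    rw [Finset.sum_congr rfl fun j _ => hreal j, ← Complex.ofReal_sum] at h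
    have hr : ∑ j, q j * Complex.normSq (C j) = 0 := by exact_mod_cast h.symm
    have hterm : q j0 * Complex.normSq (C j0) = 0 := by
      have hnn : ∀ j ∈ Finset.univ, 0 ≤ q j * Complex.normSq (C j) :=
        fun j _ => mul_nonneg (hq j) (Complex.normSq_nonneg _)
      exact (Finset.sum_eq_zero_iff_of_nonneg hnn).mp hr j0 (Finset.mem_univ j0)
    have := (mul_eq_zero.mp hterm).resolve_left (ne_of_gt hj0)
    exact Complex.normSq_eq_zero.mp this
  -- compute C j0
  have hCval : C j0 = ((∑ w, Complex.normSq (η w) : ℝ) : ℂ) := by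
    rw [show C j0 = ∑ z, (starRingEnd ℂ) (v z) * χ j0 z from congrFun hC j0]
    rw [auxSumMix (fun z => (starRingEnd ℂ) (v z) * χ j0 z)]
    have hx : ∀ x : s × r1, ∑ y' : b × r2,
        (starRingEnd ℂ) (v ((x.1, y'.1), (x.2, y'.2))) * χ j0 ((x.1, y'.1), (x.2, y'.2))
        = (if x = x0 then (1:ℂ) else 0) *
          ∑ y' : b × r2, (starRingEnd ℂ) (η y') * χ j0 ((x.1, y'.1), (x.2, y'.2)) := by
      intro x
      rw [Finset.mul_sum]
      refine Finset.sum_congr rfl fun y' _ => ?_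
      simp only [hv]
      rw [_root_.map_mul]
      have : (starRingEnd ℂ) (if ((x.1, y'.1).1, (x.2, y'.2).1) = x0 then (1:ℂ) else 0)
          = (if x = x0 then (1:ℂ) else 0) := by
        simp only [Prod.mk.eta]
        split <;> simp
      rw [this]
      ring
    rw [Finset.sum_congr rfl fun x _ => hx x]
    rw [Finset.sum_congr rfl fun x _ => by
      rw [ite_mul, one_mul, zero_mul]]
    rw [Finset.sum_ite_eq' Finset.univ x0
      (fun x => ∑ y' : b × r2, (starRingEnd ℂ) (η y') * χ j0 ((x.1, y'.1), (x.2, y'.2)))]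
    rw [if_pos (Finset.mem_univ x0)]
    have hχ : ∀ w : b × r2, χ j0 ((x0.1, w.1), (x0.2, w.2)) = η w + φ0 * ψ w := by
      intro w
      rw [hη]
      ring
    rw [Finset.sum_congr rfl fun w _ => by rw [hχ w, mul_add]]
    rw [Finset.sum_add_distrib]
    have h2 : ∑ w : b × r2, (starRingEnd ℂ) (η w) * (φ0 * ψ w)
        = φ0 * ∑ w : b × r2, (starRingEnd ℂ) (η w) * ψ w := by
      rw [Finset.mul_sum]; exact Finset.sum_congr rfl fun w _ => by ring
    rw [h2, hB', mul_zero, add_zero]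
    rw [Finset.sum_congr rfl fun w _ => show (starRingEnd ℂ) (η w) * η w
      = ((Complex.normSq (η w) : ℝ) : ℂ) from by rw [mul_comm]; exact Complex.mul_conj _]
    rw [← Complex.ofReal_sum]
  have hsum0 : ∑ w : b × r2, Complex.normSq (η w) = 0 := by
    have := hCval.symm.trans hCj0
    exact_mod_cast this
  intro w
  have := (Finset.sum_eq_zero_iff_of_nonneg
    (fun w _ => Complex.normSq_nonneg (η w))).mp hsum0 w (Finset.mem_univ w)
  exact Complex.normSq_eq_zero.mp this

private lemma auxBigDecomp {s b r1 r2 : Type*} [Fintype s] [Fintype b] [Fintype r1] [Fintype r2]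
    {ρ : Matrix (s × r1) (s × r1) ℂ} (ψ : b × r2 → ℂ) {m : ℕ} (q : Fin m → ℝ)
    (φ : Fin m → s × r1 → ℂ) (h : ρ = ∑ j, (q j : ℂ) • pureState (φ j)) :
    Matrix.submatrix (ρ ⊗ₖ pureState ψ)
        (fun z : (s × b) × (r1 × r2) => ((z.1.1, z.2.1), (z.1.2, z.2.2)))
        (fun z : (s × b) × (r1 × r2) => ((z.1.1, z.2.1), (z.1.2, z.2.2)))
      = ∑ j, (q j : ℂ) • pureState (prodVec (φ j) ψ) := by
  ext z z'
  show ρ (z.1.1, z.2.1) (z'.1.1, z'.2.1) *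
      (ψ (z.1.2, z.2.2) * (starRingEnd ℂ) (ψ (z'.1.2, z'.2.2))) = _
  rw [congrFun (congrFun h (z.1.1, z.2.1)) (z'.1.1, z'.2.1)]
  rw [Matrix.sum_apply, Matrix.sum_apply, Finset.sum_mul]
  refine Finset.sum_congr rfl fun j _ => ?_
  simp only [Matrix.smul_apply, smul_eq_mul]
  rw [auxPureStateApply, auxPureStateApply]
  show _ = (q j : ℂ) * (prodVec (φ j) ψ z * (starRingEnd ℂ) (prodVec (φ j) ψ z'))
  unfold prodVec
  rw [map_mul (starRingEnd ℂ)]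
  ring

private lemma auxTrOut {s b r1 r2 : Type*} [Fintype s] [Fintype b] [Fintype r1] [Fintype r2]
    {ρ : Matrix (s × r1) (s × r1) ℂ} {ψ : b × r2 → ℂ} (hψ : IsUnitVec ψ) {m : ℕ}
    (q : Fin m → ℝ) (χ : Fin m → (s × b) × (r1 × r2) → ℂ) (hq : ∀ j, 0 ≤ q j)
    (hsum : Matrix.submatrix (ρ ⊗ₖ pureState ψ)
        (fun z : (s × b) × (r1 × r2) => ((z.1.1, z.2.1), (z.1.2, z.2.2)))
        (fun z : (s × b) × (r1 × r2) => ((z.1.1, z.2.1), (z.1.2, z.2.2)))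
      = ∑ j, (q j : ℂ) • pureState (χ j))
    (φ' : Fin m → s × r1 → ℂ)
    (hfact : ∀ j, 0 < q j → χ j = prodVec (φ' j) ψ) :
    ρ = ∑ j, (q j : ℂ) • pureState (φ' j) := by
  set M := Matrix.submatrix (ρ ⊗ₖ pureState ψ)
        (fun z : (s × b) × (r1 × r2) => ((z.1.1, z.2.1), (z.1.2, z.2.2)))
        (fun z : (s × b) × (r1 × r2) => ((z.1.1, z.2.1), (z.1.2, z.2.2))) with hM
  have entry2 : ∀ z z', M z z' = ∑ j, (q j : ℂ) * (χ j z * (starRingEnd ℂ) (χ j z')) := by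
    intro z z'
    have h := congrFun (congrFun hsum z) z'
    rw [h, Matrix.sum_apply]
    exact Finset.sum_congr rfl fun j _ => by
      simp only [Matrix.smul_apply, smul_eq_mul]
      rfl
  have hψ1 : ∑ y : b × r2, ψ y * (starRingEnd ℂ) (ψ y) = 1 := by
    rw [← auxUnitSumConj hψ]
    exact Finset.sum_congr rfl fun y _ => mul_comm _ _
  ext x x'
  have lhs : ∑ y : b × r2, M ((x.1, y.1), (x.2, y.2)) ((x'.1, y.1), (x'.2, y.2)) = ρ x x' := by
    have he : ∀ y : b × r2, M ((x.1, y.1), (x.2, y.2)) ((x'.1, y.1), (x'.2, y.2))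
        = ρ x x' * (ψ y * (starRingEnd ℂ) (ψ y)) := fun y => rfl
    rw [Finset.sum_congr rfl fun y _ => he y, ← Finset.mul_sum, hψ1, mul_one]
  have rhs : ∑ y : b × r2, M ((x.1, y.1), (x.2, y.2)) ((x'.1, y.1), (x'.2, y.2))
      = ∑ j, (q j : ℂ) * (φ' j x * (starRingEnd ℂ) (φ' j x')) := by
    rw [Finset.sum_congr rfl fun y _ => entry2 _ _]
    rw [Finset.sum_comm]
    refine Finset.sum_congr rfl fun j _ => ?_
    by_cases hj : 0 < q j
    · rw [hfact j hj]
      have he : ∀ y : b × r2, (q j : ℂ) * (prodVec (φ' j) ψ ((x.1, y.1), (x.2, y.2)) *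
          (starRingEnd ℂ) (prodVec (φ' j) ψ ((x'.1, y.1), (x'.2, y.2))))
          = (q j : ℂ) * (φ' j x * (starRingEnd ℂ) (φ' j x')) * (ψ y * (starRingEnd ℂ) (ψ y)) := by
        intro y
        show (q j : ℂ) * ((φ' j (x.1, x.2) * ψ (y.1, y.2)) *
          (starRingEnd ℂ) (φ' j (x'.1, x'.2) * ψ (y.1, y.2))) = _
        rw [map_mul (starRingEnd ℂ)]
        ring
      rw [Finset.sum_congr rfl fun y _ => he y, ← Finset.mul_sum, hψ1, mul_one]
    · have hq0 : q j = 0 := le_antisymm (not_lt.mp hj) (hq j)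
      simp [hq0]
  rw [← lhs, rhs, Matrix.sum_apply]
  exact Finset.sum_congr rfl fun j _ => by
    simp only [Matrix.smul_apply, smul_eq_mul]
    rfl

private def EFSet {a b : Type*} [Fintype a] [Fintype b]
    [DecidableEq a] (ρ : Matrix (a × b) (a × b) ℂ) : Set ℝ :=
  { x | ∃ (m : ℕ) (q : Fin m → ℝ) (φ : Fin m → a × b → ℂ),
    (∀ j, 0 ≤ q j) ∧ (∑ j, q j = 1) ∧ (∀ j, IsUnitVec (φ j)) ∧
    ρ = ∑ j, (q j : ℂ) • pureState (φ j) ∧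
    x = ∑ j, q j * entEntropy (φ j) }

private lemma auxEFSetBdd {a b : Type*} [Fintype a] [Fintype b]
    [DecidableEq a] (ρ : Matrix (a × b) (a × b) ℂ) : BddBelow (EFSet ρ) := by
  refine ⟨0, fun x hx => ?_⟩
  obtain ⟨m, q, φ, hq, _, hu, _, rfl⟩ := hx
  exact Finset.sum_nonneg fun j _ => mul_nonneg (hq j) (auxEntEntropyNonneg (hu j))

end AuxEFP

/-- additivity of entanglement of formation for a product state
`ρ_{SBR} = ρ_{S R1} ⊗ |ψ_{B R2}⟩⟨ψ_{B R2}|` across the bipartition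
`(S⊗B)` vs `(R1⊗R2)`. -/
theorem entFormation_tensor_pure
    {s b r1 r2 : Type*} [Fintype s] [Fintype b] [Fintype r1] [Fintype r2]
    [DecidableEq s] [DecidableEq b] [DecidableEq r1] [DecidableEq r2]
    (ρSR1 : Matrix (s × r1) (s × r1) ℂ) (hρ : IsDensityMatrix ρSR1)
    (ψ : b × r2 → ℂ) (hψ : IsUnitVec ψ) :
    entFormation
      (Matrix.submatrix (ρSR1 ⊗ₖ pureState ψ)
        (fun x : (s × b) × (r1 × r2) => ((x.1.1, x.2.1), (x.1.2, x.2.2)))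
        (fun x : (s × b) × (r1 × r2) => ((x.1.1, x.2.1), (x.1.2, x.2.2)))) =
      entFormation ρSR1 + entEntropy ψ := by
  classical
  have hne : Nonempty (s × r1) := by
    by_contra hc
    rw [not_nonempty_iff] at hc
    have h1 := hρ.2
    rw [Matrix.trace, Finset.univ_eq_empty, Finset.sum_empty] at h1
    exact zero_ne_one h1
  obtain ⟨φdef, hφdef⟩ := auxExistsUnitVec (s × r1)
  show sInf (EFSet (Matrix.submatrix (ρSR1 ⊗ₖ pureState ψ)
        (fun x : (s × b) × (r1 × r2) => ((x.1.1, x.2.1), (x.1.2, x.2.2)))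
        (fun x : (s × b) × (r1 × r2) => ((x.1.1, x.2.1), (x.1.2, x.2.2)))))
      = sInf (EFSet ρSR1) + entEntropy ψ
  set T := entEntropy ψ with hT
  set M := Matrix.submatrix (ρSR1 ⊗ₖ pureState ψ)
        (fun x : (s × b) × (r1 × r2) => ((x.1.1, x.2.1), (x.1.2, x.2.2)))
        (fun x : (s × b) × (r1 × r2) => ((x.1.1, x.2.1), (x.1.2, x.2.2))) with hM
  have hne2 : (EFSet ρSR1).Nonempty := by
    obtain ⟨q, φ, hq, hq1, hu, hdec⟩ := auxDensityDecomp hρ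
    exact ⟨∑ j, q j * entEntropy (φ j), _, q, φ, hq, hq1, hu, hdec, rfl⟩
  have mem1 : ∀ x ∈ EFSet ρSR1, x + T ∈ EFSet M := by
    rintro x ⟨m, q, φ, hq, hq1, hu, hdec, rfl⟩
    refine ⟨m, q, fun j => prodVec (φ j) ψ, hq, hq1, fun j => auxProdVecUnit (hu j) hψ,
      auxBigDecomp ψ q φ hdec, ?_⟩
    show ∑ j, q j * entEntropy (φ j) + T = ∑ j, q j * entEntropy (prodVec (φ j) ψ)
    have hper : ∀ j, q j * entEntropy (prodVec (φ j) ψ)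
        = q j * entEntropy (φ j) + q j * T := fun j => by
      rw [auxEntEntropyProdVec (hu j) hψ]; ring
    rw [Finset.sum_congr rfl fun j _ => hper j, Finset.sum_add_distrib, ← Finset.sum_mul,
      hq1, one_mul]
  have mem2 : ∀ x ∈ EFSet M, ∃ y ∈ EFSet ρSR1, x = y + T := by
    rintro x ⟨m, q, χ, hq, hq1, hu, hdec, rfl⟩
    set φ' : Fin m → s × r1 → ℂ := fun j => if 0 < q j then
      (fun x0 => ∑ y', (starRingEnd ℂ) (ψ y') * χ j ((x0.1, y'.1), (x0.2, y'.2))) else φdef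
      with hφ'
    have hfact : ∀ j, 0 < q j → χ j = prodVec (φ' j) ψ := by
      intro j hj
      funext z
      have h := auxDecompFactor ρSR1 ψ hψ q χ hq hdec j hj (z.1.1, z.2.1) (z.1.2, z.2.2)
      show χ j z = φ' j (z.1.1, z.2.1) * ψ (z.1.2, z.2.2)
      rw [hφ']
      simp only [if_pos hj]
      exact h
    have hu' : ∀ j, IsUnitVec (φ' j) := by
      intro j
      by_cases hj : 0 < q j
      · exact auxUnitOfProdVec hψ (by rw [← hfact j hj]; exact hu j)
      · rw [hφ']; simp only [if_neg hj]; exact hφdef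
    refine ⟨∑ j, q j * entEntropy (φ' j),
      ⟨m, q, φ', hq, hq1, hu', auxTrOut hψ q χ hq hdec φ' hfact, rfl⟩, ?_⟩
    have hper : ∀ j, q j * entEntropy (χ j) = q j * entEntropy (φ' j) + q j * T := by
      intro j
      by_cases hj : 0 < q j
      · rw [hfact j hj, auxEntEntropyProdVec (hu' j) hψ]; ring
      · have h0 : q j = 0 := le_antisymm (not_lt.mp hj) (hq j)
        simp [h0]
    rw [Finset.sum_congr rfl fun j _ => hper j, Finset.sum_add_distrib, ← Finset.sum_mul,
      hq1, one_mul]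
  have hbdd1 : BddBelow (EFSet M) := auxEFSetBdd M
  have hbdd2 : BddBelow (EFSet ρSR1) := auxEFSetBdd ρSR1
  have hne1 : (EFSet M).Nonempty := by
    obtain ⟨y, hy⟩ := hne2
    exact ⟨y + T, mem1 y hy⟩
  apply le_antisymm
  · have step : ∀ y ∈ EFSet ρSR1, sInf (EFSet M) - T ≤ y := fun y hy => by
      have h := csInf_le hbdd1 (mem1 y hy)
      linarith
    have h := le_csInf hne2 step
    linarith
  · refine le_csInf hne1 fun x hx => ?_
    obtain ⟨y, hy, rfl⟩ := mem2 x hx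
    have h := csInf_le hbdd2 hy
    linarith
end

section
/- If a thermodynamic process with binary measurement satisfies Σ_{k=0,1} p_k S(ρ_2^{(k)}) = S(Σ_{k=0,1} p_k U_k ρ_2^{(k)} U_k†) for some unitaries U_0, U_1 (with p_0, p_1 > 0), then ρ_2^{(0)} and ρ_2^{(1)} are unitarily equivalent: there exists a unitary W with W ρ_2^{(0)} W† = ρ_2^{(1)}. -/
open Matrix BigOperators
open scoped Kronecker ComplexOrder

namespace BinHelper
variable {n : Type*} [Fintype n] [DecidableEq n]

lemma klein_scalar {x y : ℝ} (hx : 0 ≤ x) (hy : 0 ≤ y) (hxy : y = 0 → x = 0) :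
    x - y ≤ x * Real.log x - x * Real.log y ∧
    (x * Real.log x - x * Real.log y = x - y → x = y) := by
  rcases hx.eq_or_lt with h0 | hxpos
  · subst h0
    simp only [zero_mul, sub_zero, zero_sub, sub_self]
    constructor
    · linarith
    · intro h; linarith
  · have hypos : 0 < y := by
      rcases hy.eq_or_lt with h0 | h; · exact absurd (hxy h0.symm) (by positivity)
      · exact h
    have hlog : Real.log (y / x) ≤ y / x - 1 := Real.log_le_sub_one_of_pos (by positivity)
    have hdiv : Real.log (y / x) = Real.log y - Real.log x := Real.log_div hypos.ne' hxpos.ne'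
    constructor
    · have := mul_le_mul_of_nonneg_left hlog hxpos.le
      rw [hdiv] at this
      have hxy' : x * (y / x - 1) = y - x := by field_simp
      nlinarith
    · intro heq
      by_contra hne
      have hne' : y / x ≠ 1 := by
        intro h; exact hne ((div_eq_one_iff_eq hxpos.ne').mp h).symm
      have hstrict : Real.log (y / x) < y / x - 1 :=
        Real.log_lt_sub_one_of_pos (by positivity) hne'
      rw [hdiv] at hstrict
      have := mul_lt_mul_of_pos_left hstrict hxpos
      have hxy' : x * (y / x - 1) = y - x := by field_simp
      nlinarith

lemma trace_DBD (a b : n → ℝ) (B : Matrix n n ℂ) :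
    (Matrix.diagonal (fun i => (a i : ℂ)) * B * Matrix.diagonal (fun j => (b j : ℂ)) * Bᴴ).trace
      = ((∑ i, ∑ j, a i * b j * Complex.normSq (B i j) : ℝ) : ℂ) := by
  set X := Matrix.diagonal (fun i => (a i : ℂ)) * B * Matrix.diagonal (fun j => (b j : ℂ)) with hXdef
  have hX : ∀ i j, X i j = (a i : ℂ) * B i j * (b j : ℂ) := by
    intro i j
    rw [hXdef, Matrix.mul_diagonal, Matrix.diagonal_mul]
  simp only [Matrix.trace, Matrix.diag_apply, Matrix.mul_apply, Matrix.conjTranspose_apply, hX]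
  push_cast [← Complex.mul_conj]
  refine Finset.sum_congr rfl fun i _ => Finset.sum_congr rfl fun j _ => ?_
  simp only [RCLike.star_def]
  ring

lemma entry_BDB (a : n → ℝ) (B : Matrix n n ℂ) (j : n) :
    (Bᴴ * Matrix.diagonal (fun i => (a i : ℂ)) * B) j j
      = ((∑ i, a i * Complex.normSq (B i j) : ℝ) : ℂ) := by
  simp only [Matrix.mul_apply, Matrix.conjTranspose_apply, Matrix.diagonal_apply, ite_mul, zero_mul,
    mul_ite, mul_zero, Finset.sum_ite_eq, Finset.sum_ite_eq', Finset.mem_univ, if_true]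
  push_cast [← Complex.mul_conj]
  refine Finset.sum_congr rfl fun i _ => ?_
  simp only [RCLike.star_def]
  ring

lemma psd_diag_nonneg {M : Matrix n n ℂ} (hM : M.PosSemidef) (j : n) : 0 ≤ M j j := by
  exact hM.diag_nonneg

lemma trace_unitary_conj {U : Matrix n n ℂ} (hU : Uᴴ * U = 1) (X : Matrix n n ℂ) :
    (U * X * Uᴴ).trace = X.trace := by
  rw [Matrix.trace_mul_cycle, hU, Matrix.one_mul]

lemma umem {U : Matrix n n ℂ} (hU : U ∈ Matrix.unitaryGroup n ℂ) :
    U * Uᴴ = 1 ∧ Uᴴ * U = 1 := by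
  rw [← Matrix.star_eq_conjTranspose]
  exact ⟨Matrix.mem_unitaryGroup_iff.mp hU, Matrix.mem_unitaryGroup_iff'.mp hU⟩

lemma mic {P Q : Matrix n n ℂ} (h : P * Q = 1) (X : Matrix n n ℂ) :
    P * (Q * X) = X := by rw [← Matrix.mul_assoc, h, Matrix.one_mul]

lemma spectral' {ρ : Matrix n n ℂ} (h : ρ.IsHermitian) :
    ρ = (h.eigenvectorUnitary : Matrix n n ℂ) *
      Matrix.diagonal (fun i => (h.eigenvalues i : ℂ)) *
      (h.eigenvectorUnitary : Matrix n n ℂ)ᴴ := by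
  conv_lhs => rw [h.spectral_theorem]
  rfl

lemma matLog_eq {ρ : Matrix n n ℂ} (h : ρ.IsHermitian) :
    matLog ρ = (h.eigenvectorUnitary : Matrix n n ℂ) *
      Matrix.diagonal (fun i => (Real.log (h.eigenvalues i) : ℂ)) *
      (h.eigenvectorUnitary : Matrix n n ℂ)ᴴ := by
  rw [matLog, dif_pos h]
  rfl

lemma vnEntropy_eq {ρ : Matrix n n ℂ} (h : ρ.IsHermitian) :
    vnEntropy ρ = -∑ i, h.eigenvalues i * Real.log (h.eigenvalues i) := by
  rw [vnEntropy, dif_pos h]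

lemma trace_eq_sum_eigs {ρ : Matrix n n ℂ} (h : ρ.IsHermitian) :
    ρ.trace = ((∑ i, h.eigenvalues i : ℝ) : ℂ) := by
  conv_lhs => rw [spectral' h]
  rw [Matrix.trace_mul_cycle, (umem (h.eigenvectorUnitary).2).2, Matrix.one_mul,
    Matrix.trace_diagonal]
  push_cast
  rfl

lemma re_trace_mul_matLog {ρ σ : Matrix n n ℂ} (hρ : ρ.IsHermitian) (hσ : σ.IsHermitian) :
    ((ρ * matLog σ).trace).re =
      ∑ i, ∑ j, hρ.eigenvalues i * Real.log (hσ.eigenvalues j) *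
        Complex.normSq (((hρ.eigenvectorUnitary : Matrix n n ℂ)ᴴ *
          (hσ.eigenvectorUnitary : Matrix n n ℂ)) i j) := by
  set U := (hρ.eigenvectorUnitary : Matrix n n ℂ) with hUdef
  set V := (hσ.eigenvectorUnitary : Matrix n n ℂ) with hVdef
  have hU1 : U * Uᴴ = 1 := (umem (hρ.eigenvectorUnitary).2).1
  have hU2 : Uᴴ * U = 1 := (umem (hρ.eigenvectorUnitary).2).2
  rw [matLog_eq hσ]
  conv_lhs => rw [spectral' hρ]
  have hmat : (U * Matrix.diagonal (fun i => (hρ.eigenvalues i : ℂ)) * Uᴴ) *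
      (V * Matrix.diagonal (fun j => (Real.log (hσ.eigenvalues j) : ℂ)) * Vᴴ)
      = U * (Matrix.diagonal (fun i => (hρ.eigenvalues i : ℂ)) * (Uᴴ * V) *
        Matrix.diagonal (fun j => (Real.log (hσ.eigenvalues j) : ℂ)) * (Uᴴ * V)ᴴ) * Uᴴ := by
    simp only [Matrix.conjTranspose_mul, Matrix.conjTranspose_conjTranspose, Matrix.mul_assoc,
      hU1, Matrix.mul_one]
  rw [hmat, trace_unitary_conj hU2, trace_DBD, Complex.ofReal_re]

lemma re_trace_self {ρ : Matrix n n ℂ} (h : ρ.IsHermitian) :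
    ((ρ * matLog ρ).trace).re = ∑ i, h.eigenvalues i * Real.log (h.eigenvalues i) := by
  set lam := h.eigenvalues with hlam
  set U := (h.eigenvectorUnitary : Matrix n n ℂ) with hUdef
  have hU1 : U * Uᴴ = 1 := (umem (h.eigenvectorUnitary).2).1
  have hU2 : Uᴴ * U = 1 := (umem (h.eigenvectorUnitary).2).2
  have hsp : ρ = U * Matrix.diagonal (fun i => (lam i : ℂ)) * Uᴴ := spectral' h
  have hlg : matLog ρ = U * Matrix.diagonal (fun i => (Real.log (lam i) : ℂ)) * Uᴴ := matLog_eq h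
  have hmat : ρ * matLog ρ = U * (Matrix.diagonal (fun i => (lam i : ℂ)) *
      Matrix.diagonal (fun i => (Real.log (lam i) : ℂ))) * Uᴴ := by
    rw [hlg]
    conv_lhs => rw [hsp]
    simp only [Matrix.mul_assoc, mic hU2]
  rw [hmat, trace_unitary_conj hU2, Matrix.diagonal_mul_diagonal, Matrix.trace_diagonal]
  rw [show ∑ i, ((lam i : ℂ) * (Real.log (lam i) : ℂ)) =
    ((∑ i, lam i * Real.log (lam i) : ℝ) : ℂ) by push_cast; rfl]
  exact Complex.ofReal_re _

lemma vnEntropy_neg_trace {ρ : Matrix n n ℂ} (h : ρ.IsHermitian) :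
    vnEntropy ρ = -((ρ * matLog ρ).trace).re := by
  rw [vnEntropy_eq h, re_trace_self h]

lemma eigen_rel {lam mu : n → ℝ} {A : Matrix n n ℂ}
    (h : Matrix.diagonal (fun i => (mu i : ℂ)) * A = A * Matrix.diagonal (fun j => (lam j : ℂ))) :
    ∀ i j, A i j ≠ 0 → mu i = lam j := by
  intro i j hA
  have h' := Matrix.ext_iff.mpr h i j
  rw [Matrix.diagonal_mul, Matrix.mul_diagonal, mul_comm ((mu i : ℂ)) (A i j)] at h'
  exact_mod_cast mul_left_cancel₀ hA h'

lemma intertwine {lam mu : n → ℝ} {A : Matrix n n ℂ}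
    (h : ∀ i j, A i j ≠ 0 → lam i = mu j) (g : ℝ → ℂ) :
    Matrix.diagonal (fun i => g (lam i)) * A = A * Matrix.diagonal (fun j => g (mu j)) := by
  ext i j
  rw [Matrix.diagonal_mul, Matrix.mul_diagonal]
  by_cases hA : A i j = 0
  · simp [hA]
  · rw [h i j hA, mul_comm]

lemma hermitian_conj {U ρ : Matrix n n ℂ} (hU : U ∈ Matrix.unitaryGroup n ℂ)
    (h : ρ.IsHermitian) : (U * ρ * Uᴴ).IsHermitian := by
  have : (U * ρ * Uᴴ)ᴴ = U * ρᴴ * Uᴴ := by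
    simp only [Matrix.conjTranspose_mul, Matrix.conjTranspose_conjTranspose, Matrix.mul_assoc]
  rw [Matrix.IsHermitian, this, h.eq]

lemma matLog_conj {U ρ : Matrix n n ℂ} (hUm : U ∈ Matrix.unitaryGroup n ℂ)
    (h : ρ.IsHermitian) : matLog (U * ρ * Uᴴ) = U * matLog ρ * Uᴴ := by
  have hM : (U * ρ * Uᴴ).IsHermitian := hermitian_conj hUm h
  have hU1 : U * Uᴴ = 1 := (umem hUm).1
  have hU2 : Uᴴ * U = 1 := (umem hUm).2
  set lam := h.eigenvalues with hlamdef
  set mu := hM.eigenvalues with hmudef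
  set U' := (h.eigenvectorUnitary : Matrix n n ℂ) with hU'def
  set V := (hM.eigenvectorUnitary : Matrix n n ℂ) with hVdef
  have hU'1 : U' * U'ᴴ = 1 := (umem (h.eigenvectorUnitary).2).1
  have hU'2 : U'ᴴ * U' = 1 := (umem (h.eigenvectorUnitary).2).2
  have hV1 : V * Vᴴ = 1 := (umem (hM.eigenvectorUnitary).2).1
  have hV2 : Vᴴ * V = 1 := (umem (hM.eigenvectorUnitary).2).2
  set W := U * U' with hWdef
  have hW1 : W * Wᴴ = 1 := by
    rw [hWdef, Matrix.conjTranspose_mul]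
    calc U * U' * (U'ᴴ * Uᴴ) = U * (U' * U'ᴴ) * Uᴴ := by simp only [Matrix.mul_assoc]
    _ = 1 := by rw [hU'1, Matrix.mul_one, hU1]
  have hW2 : Wᴴ * W = 1 := by
    rw [hWdef, Matrix.conjTranspose_mul]
    calc U'ᴴ * Uᴴ * (U * U') = U'ᴴ * (Uᴴ * U) * U' := by simp only [Matrix.mul_assoc]
    _ = 1 := by rw [hU2, Matrix.mul_one, hU'2]
  have hspec2 : U * ρ * Uᴴ = W * Matrix.diagonal (fun i => (lam i : ℂ)) * Wᴴ := by
    conv_lhs => rw [spectral' h]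
    rw [hWdef, Matrix.conjTranspose_mul]
    simp only [Matrix.mul_assoc]
    rfl
  have hVW : V * Matrix.diagonal (fun i => (mu i : ℂ)) * Vᴴ
      = W * Matrix.diagonal (fun i => (lam i : ℂ)) * Wᴴ := (spectral' hM).symm.trans hspec2
  set A := Vᴴ * W with hAdef
  have hDA : Matrix.diagonal (fun i => (mu i : ℂ)) * A
      = A * Matrix.diagonal (fun j => (lam j : ℂ)) := by
    have h1 := congrArg (fun X => Vᴴ * (X * W)) hVW
    simp only [Matrix.mul_assoc] at h1
    rw [mic hV2, hW2, Matrix.mul_one] at h1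
    rw [hAdef, h1, ← Matrix.mul_assoc]
  have hrel := eigen_rel hDA
  have hlog := intertwine hrel (fun x => ((Real.log x : ℝ) : ℂ))
  have hAW : A * Wᴴ = Vᴴ := by
    rw [hAdef, Matrix.mul_assoc, hW1, Matrix.mul_one]
  rw [matLog_eq hM]
  have : V * Matrix.diagonal (fun i => (Real.log (mu i) : ℂ)) * Vᴴ
      = W * Matrix.diagonal (fun i => (Real.log (lam i) : ℂ)) * Wᴴ := by
    calc V * Matrix.diagonal (fun i => (Real.log (mu i) : ℂ)) * Vᴴ
        = V * (Matrix.diagonal (fun i => (Real.log (mu i) : ℂ)) * A) * Wᴴ := by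
          rw [← hAW]; simp only [Matrix.mul_assoc]
      _ = V * (A * Matrix.diagonal (fun i => (Real.log (lam i) : ℂ))) * Wᴴ := by rw [hlog]
      _ = W * Matrix.diagonal (fun i => (Real.log (lam i) : ℂ)) * Wᴴ := by
          rw [hAdef]
          have : V * (Vᴴ * W * Matrix.diagonal (fun i => (Real.log (lam i) : ℂ)))
              = W * Matrix.diagonal (fun i => (Real.log (lam i) : ℂ)) := by
            simp only [Matrix.mul_assoc, mic hV1]
          rw [this]
  rw [this, matLog_eq h, hWdef, Matrix.conjTranspose_mul]
  simp only [Matrix.mul_assoc]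
  rfl

lemma vnEntropy_conj {U ρ : Matrix n n ℂ} (hUm : U ∈ Matrix.unitaryGroup n ℂ)
    (h : ρ.IsHermitian) : vnEntropy (U * ρ * Uᴴ) = vnEntropy ρ := by
  have hM : (U * ρ * Uᴴ).IsHermitian := hermitian_conj hUm h
  have hU1 : U * Uᴴ = 1 := (umem hUm).1
  have hU2 : Uᴴ * U = 1 := (umem hUm).2
  rw [vnEntropy_neg_trace hM, vnEntropy_neg_trace h]
  congr 2
  rw [matLog_conj hUm h]
  have : U * ρ * Uᴴ * (U * matLog ρ * Uᴴ) = U * (ρ * matLog ρ) * Uᴴ := by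
    simp only [Matrix.mul_assoc, mic hU2]
  rw [this, trace_unitary_conj hU2]

lemma psd_smul {M : Matrix n n ℂ} (hM : M.PosSemidef) {c : ℝ} (hc : 0 ≤ c) :
    ((c : ℂ) • M).PosSemidef := by
  constructor
  · rw [Matrix.IsHermitian, Matrix.conjTranspose_smul, hM.1.eq]
    congr 1
    simp [Complex.star_def, Complex.conj_ofReal]
  · intro x
    exact (hM.smul (Complex.zero_le_real.mpr hc)).2 x

lemma klein {ρ σ : Matrix n n ℂ} (hρ : ρ.PosSemidef) (hσ : σ.PosSemidef)
    (htr : ρ.trace = σ.trace) {c : ℝ} (hc : 0 < c)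
    (hPSD : (σ - (c : ℂ) • ρ).PosSemidef) :
    0 ≤ relEntropy ρ σ ∧ (relEntropy ρ σ = 0 → ρ = σ) := by
  have hρH := hρ.1
  have hσH := hσ.1
  set lam := hρH.eigenvalues with hlamdef
  set mu := hσH.eigenvalues with hmudef
  set U := (hρH.eigenvectorUnitary : Matrix n n ℂ) with hUdef
  set V := (hσH.eigenvectorUnitary : Matrix n n ℂ) with hVdef
  have hU1 : U * Uᴴ = 1 := (umem (hρH.eigenvectorUnitary).2).1
  have hU2 : Uᴴ * U = 1 := (umem (hρH.eigenvectorUnitary).2).2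
  have hV1 : V * Vᴴ = 1 := (umem (hσH.eigenvectorUnitary).2).1
  have hV2 : Vᴴ * V = 1 := (umem (hσH.eigenvectorUnitary).2).2
  set B := Uᴴ * V with hBdef
  set P : n → n → ℝ := fun i j => Complex.normSq (B i j) with hPdef
  have hlam : ∀ i, 0 ≤ lam i := fun i => hρ.eigenvalues_nonneg i
  have hmu : ∀ j, 0 ≤ mu j := fun j => hσ.eigenvalues_nonneg j
  have hPnn : ∀ i j, 0 ≤ P i j := fun i j => Complex.normSq_nonneg _
  have hB1 : B * Bᴴ = 1 := by
    rw [hBdef, Matrix.conjTranspose_mul, Matrix.conjTranspose_conjTranspose]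
    calc Uᴴ * V * (Vᴴ * U) = Uᴴ * (V * (Vᴴ * U)) := by rw [Matrix.mul_assoc]
      _ = 1 := by rw [mic hV1, hU2]
  have hB2 : Bᴴ * B = 1 := by
    rw [hBdef, Matrix.conjTranspose_mul, Matrix.conjTranspose_conjTranspose]
    calc Vᴴ * U * (Uᴴ * V) = Vᴴ * (U * (Uᴴ * V)) := by rw [Matrix.mul_assoc]
      _ = 1 := by rw [mic hU1, hV2]
  have hProw : ∀ i, ∑ j, P i j = 1 := by
    intro i
    have h1 : (B * Bᴴ) i i = 1 := by rw [hB1, Matrix.one_apply_eq]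
    rw [Matrix.mul_apply] at h1
    have h2 : ∑ j, ((P i j : ℝ) : ℂ) = 1 := by
      rw [← h1]
      refine Finset.sum_congr rfl fun j _ => ?_
      simp only [hPdef, Matrix.conjTranspose_apply, Complex.star_def, Complex.mul_conj]
    rw [← Complex.ofReal_sum] at h2
    exact_mod_cast h2
  have hPcol : ∀ j, ∑ i, P i j = 1 := by
    intro j
    have h1 : (Bᴴ * B) j j = 1 := by rw [hB2, Matrix.one_apply_eq]
    rw [Matrix.mul_apply] at h1
    have h2 : ∑ i, ((P i j : ℝ) : ℂ) = 1 := by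
      rw [← h1]
      refine Finset.sum_congr rfl fun i _ => ?_
      simp only [hPdef, Matrix.conjTranspose_apply, Complex.star_def]
      rw [Complex.normSq_eq_conj_mul_self]
    rw [← Complex.ofReal_sum] at h2
    exact_mod_cast h2
  have htr' : ∑ i, lam i = ∑ j, mu j := by
    have h1 := htr
    rw [trace_eq_sum_eigs hρH, trace_eq_sum_eigs hσH] at h1
    exact_mod_cast h1
  have hspρ : ρ = U * Matrix.diagonal (fun i => (lam i : ℂ)) * Uᴴ := spectral' hρH
  have hspσ : σ = V * Matrix.diagonal (fun j => (mu j : ℂ)) * Vᴴ := spectral' hσH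
  have hVρV : ∀ j, (Vᴴ * ρ * V) j j = ((∑ i, lam i * P i j : ℝ) : ℂ) := by
    intro j
    have hmat : Vᴴ * ρ * V = Bᴴ * Matrix.diagonal (fun i => (lam i : ℂ)) * B := by
      rw [hspρ, hBdef, Matrix.conjTranspose_mul, Matrix.conjTranspose_conjTranspose]
      simp only [Matrix.mul_assoc]
    rw [hmat, entry_BDB]
  have hVσV : Vᴴ * σ * V = Matrix.diagonal (fun j => (mu j : ℂ)) := by
    rw [hspσ]
    calc Vᴴ * (V * Matrix.diagonal (fun j => (mu j : ℂ)) * Vᴴ) * V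
        = Vᴴ * (V * (Matrix.diagonal (fun j => (mu j : ℂ)) * (Vᴴ * V))) := by
          simp only [Matrix.mul_assoc]
      _ = Matrix.diagonal (fun j => (mu j : ℂ)) := by rw [hV2, Matrix.mul_one, mic hV2]
  have hsupp : ∀ j, mu j = 0 → ∀ i, lam i * P i j = 0 := by
    intro j hj
    have hpsd2 : (Vᴴ * (σ - (c : ℂ) • ρ) * V).PosSemidef :=
      hPSD.conjTranspose_mul_mul_same V
    have hd := psd_diag_nonneg hpsd2 j
    have hexp : Vᴴ * (σ - (c : ℂ) • ρ) * V = Vᴴ * σ * V - (c : ℂ) • (Vᴴ * ρ * V) := by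
      rw [Matrix.mul_sub, Matrix.sub_mul, Matrix.mul_smul, Matrix.smul_mul]
    rw [hexp] at hd
    have hd' : (0 : ℂ) ≤ (mu j : ℂ) - (c : ℂ) * ((∑ i, lam i * P i j : ℝ) : ℂ) := by
      rwa [Matrix.sub_apply, Matrix.smul_apply, hVσV, hVρV, Matrix.diagonal_apply_eq,
        smul_eq_mul] at hd
    have hs : (0 : ℝ) ≤ mu j - c * ∑ i, lam i * P i j := by
      have : ((mu j - c * ∑ i, lam i * P i j : ℝ) : ℂ)
          = (mu j : ℂ) - (c : ℂ) * ((∑ i, lam i * P i j : ℝ) : ℂ) := by push_cast; ring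
      rw [← Complex.zero_le_real, this]
      exact hd'
    have hsnn : (0 : ℝ) ≤ ∑ i, lam i * P i j :=
      Finset.sum_nonneg fun i _ => mul_nonneg (hlam i) (hPnn i j)
    have hzero : ∑ i, lam i * P i j = 0 := by nlinarith
    intro i
    exact (Finset.sum_eq_zero_iff_of_nonneg
      (fun i _ => mul_nonneg (hlam i) (hPnn i j))).mp hzero i (Finset.mem_univ i)
  have hone : relEntropy ρ σ = (∑ i, lam i * Real.log (lam i))
      - ∑ i, ∑ j, lam i * Real.log (mu j) * P i j := by
    rw [relEntropy, Matrix.mul_sub, Matrix.trace_sub, Complex.sub_re,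
      re_trace_self hρH, re_trace_mul_matLog hρH hσH]
  have hterm : ∀ i j, 0 ≤ P i j *
      ((lam i * Real.log (lam i) - lam i * Real.log (mu j)) - (lam i - mu j)) := by
    intro i j
    by_cases hP : P i j = 0
    · rw [hP, zero_mul]
    · have hxy : mu j = 0 → lam i = 0 := by
        intro hj
        rcases mul_eq_zero.mp (hsupp j hj i) with h | h
        · exact h
        · exact absurd h hP
      have h1 := (klein_scalar (hlam i) (hmu j) hxy).1
      exact mul_nonneg (hPnn i j) (by linarith)
  have hsum1 : ∑ i, lam i * Real.log (lam i)
      = ∑ i, ∑ j, P i j * (lam i * Real.log (lam i)) := by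
    refine Finset.sum_congr rfl fun i _ => ?_
    rw [← Finset.sum_mul, hProw i, one_mul]
  have hsum2 : ∑ i, ∑ j, P i j * (lam i - mu j) = 0 := by
    have e1 : ∑ i, ∑ j, P i j * lam i = ∑ i, lam i := by
      refine Finset.sum_congr rfl fun i _ => ?_
      rw [← Finset.sum_mul, hProw i, one_mul]
    have e2 : ∑ i, ∑ j, P i j * mu j = ∑ j, mu j := by
      rw [Finset.sum_comm]
      refine Finset.sum_congr rfl fun j _ => ?_
      rw [← Finset.sum_mul, hPcol j, one_mul]
    simp only [mul_sub, Finset.sum_sub_distrib]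
    rw [e1, e2, htr', sub_self]
  have hDsum : relEntropy ρ σ = ∑ i, ∑ j, P i j *
      ((lam i * Real.log (lam i) - lam i * Real.log (mu j)) - (lam i - mu j)) := by
    have expand : ∀ i j, P i j *
        ((lam i * Real.log (lam i) - lam i * Real.log (mu j)) - (lam i - mu j))
        = P i j * (lam i * Real.log (lam i)) - lam i * Real.log (mu j) * P i j
          - P i j * (lam i - mu j) := by
      intro i j; ring
    simp only [expand, Finset.sum_sub_distrib]
    rw [← hsum1, hsum2, sub_zero, hone]
  constructor
  · rw [hDsum]
    exact Finset.sum_nonneg fun i _ => Finset.sum_nonneg fun j _ => hterm i j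
  · intro hzero
    rw [hDsum] at hzero
    have hall := (Finset.sum_eq_zero_iff_of_nonneg
      (fun i _ => Finset.sum_nonneg fun j _ => hterm i j)).mp hzero
    have hrel : ∀ i j, B i j ≠ 0 → lam i = mu j := by
      intro i j hB0
      have hP' : P i j ≠ 0 := by
        simp only [hPdef]
        exact fun hh => hB0 (Complex.normSq_eq_zero.mp hh)
      have h1 := (Finset.sum_eq_zero_iff_of_nonneg (fun j _ => hterm i j)).mp
        (hall i (Finset.mem_univ i)) j (Finset.mem_univ j)
      have hterm0 : (lam i * Real.log (lam i) - lam i * Real.log (mu j)) - (lam i - mu j) = 0 := by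
        rcases mul_eq_zero.mp h1 with h | h
        · exact absurd h hP'
        · exact h
      have hxy : mu j = 0 → lam i = 0 := by
        intro hj
        rcases mul_eq_zero.mp (hsupp j hj i) with h | h
        · exact h
        · exact absurd h hP'
      exact (klein_scalar (hlam i) (hmu j) hxy).2 (by linarith)
    have hint := intertwine hrel (fun x => ((x : ℝ) : ℂ))
    have hUB : U * B = V := by rw [hBdef, ← Matrix.mul_assoc, hU1, Matrix.one_mul]
    have hdiag : Matrix.diagonal (fun i => (lam i : ℂ))
        = B * Matrix.diagonal (fun j => (mu j : ℂ)) * Bᴴ := by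
      calc Matrix.diagonal (fun i => (lam i : ℂ))
          = Matrix.diagonal (fun i => (lam i : ℂ)) * (B * Bᴴ) := by
            rw [hB1, Matrix.mul_one]
        _ = Matrix.diagonal (fun i => (lam i : ℂ)) * B * Bᴴ := by rw [← Matrix.mul_assoc]
        _ = B * Matrix.diagonal (fun j => (mu j : ℂ)) * Bᴴ := by rw [hint]
    rw [hspρ, hspσ, ← hUB, hdiag]
    simp only [hBdef, Matrix.conjTranspose_mul, Matrix.conjTranspose_conjTranspose,
      Matrix.mul_assoc]

end BinHelper

/-- if `Σ_k p_k S(ρ_2^{(k)}) = S(Σ_k p_k U_k ρ_2^{(k)} U_k†)` for a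
binary measurement with `p_0, p_1 > 0`, then the two post-measurement states are
unitarily equivalent. -/
theorem binary_equality_implies_LU {n : Type*} [Fintype n] [DecidableEq n]
    (p : Fin 2 → ℝ) (ρ2 : Fin 2 → Matrix n n ℂ) (U : Fin 2 → Matrix n n ℂ)
    (hp : ∀ k, 0 < p k) (hsum : ∑ k, p k = 1)
    (hρ2 : ∀ k, IsDensityMatrix (ρ2 k))
    (hU : ∀ k, U k ∈ Matrix.unitaryGroup n ℂ)
    (heq : ∑ k, p k * vnEntropy (ρ2 k) =
      vnEntropy (∑ k, (p k : ℂ) • (U k * ρ2 k * (U k)ᴴ))) :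
    ∃ W ∈ Matrix.unitaryGroup n ℂ, W * ρ2 0 * Wᴴ = ρ2 1 := by
  classical
  open BinHelper in
  set σ0 := U 0 * ρ2 0 * (U 0)ᴴ with hσ0def
  set σ1 := U 1 * ρ2 1 * (U 1)ᴴ with hσ1def
  set σ : Matrix n n ℂ := ∑ k, (p k : ℂ) • (U k * ρ2 k * (U k)ᴴ) with hσdef
  have hUk1 : ∀ k, U k * (U k)ᴴ = 1 := fun k => (BinHelper.umem (hU k)).1
  have hUk2 : ∀ k, (U k)ᴴ * U k = 1 := fun k => (BinHelper.umem (hU k)).2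
  have hσ0PSD : σ0.PosSemidef := (hρ2 0).1.mul_mul_conjTranspose_same (U 0)
  have hσ1PSD : σ1.PosSemidef := (hρ2 1).1.mul_mul_conjTranspose_same (U 1)
  have hσ0tr : σ0.trace = 1 := by
    rw [hσ0def, BinHelper.trace_unitary_conj (hUk2 0), (hρ2 0).2]
  have hσ1tr : σ1.trace = 1 := by
    rw [hσ1def, BinHelper.trace_unitary_conj (hUk2 1), (hρ2 1).2]
  have hσ2 : σ = (p 0 : ℂ) • σ0 + (p 1 : ℂ) • σ1 := by
    rw [hσdef, Fin.sum_univ_two]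
  have hσPSD : σ.PosSemidef := by
    rw [hσ2]
    exact (BinHelper.psd_smul hσ0PSD (hp 0).le).add (BinHelper.psd_smul hσ1PSD (hp 1).le)
  have hpsum : p 0 + p 1 = 1 := by rw [← hsum, Fin.sum_univ_two]
  have hσtr : σ.trace = 1 := by
    rw [hσ2, Matrix.trace_add, Matrix.trace_smul, Matrix.trace_smul, hσ0tr, hσ1tr,
      smul_eq_mul, smul_eq_mul, mul_one, mul_one]
    exact_mod_cast hpsum
  have hsub0 : σ - (p 0 : ℂ) • σ0 = (p 1 : ℂ) • σ1 := by rw [hσ2]; abel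
  have hsub1 : σ - (p 1 : ℂ) • σ1 = (p 0 : ℂ) • σ0 := by rw [hσ2]; abel
  have hK0 := BinHelper.klein hσ0PSD hσPSD (by rw [hσ0tr, hσtr]) (hp 0)
    (by rw [hsub0]; exact BinHelper.psd_smul hσ1PSD (hp 1).le)
  have hK1 := BinHelper.klein hσ1PSD hσPSD (by rw [hσ1tr, hσtr]) (hp 1)
    (by rw [hsub1]; exact BinHelper.psd_smul hσ0PSD (hp 0).le)
  have hS0 : vnEntropy σ0 = vnEntropy (ρ2 0) := BinHelper.vnEntropy_conj (hU 0) (hρ2 0).1.1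
  have hS1 : vnEntropy σ1 = vnEntropy (ρ2 1) := BinHelper.vnEntropy_conj (hU 1) (hρ2 1).1.1
  have hσH : σ.IsHermitian := hσPSD.1
  have hrel0 : relEntropy σ0 σ = -vnEntropy σ0 - ((σ0 * matLog σ).trace).re := by
    rw [relEntropy, Matrix.mul_sub, Matrix.trace_sub, Complex.sub_re,
      BinHelper.vnEntropy_neg_trace hσ0PSD.1]
    ring
  have hrel1 : relEntropy σ1 σ = -vnEntropy σ1 - ((σ1 * matLog σ).trace).re := by
    rw [relEntropy, Matrix.mul_sub, Matrix.trace_sub, Complex.sub_re,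
      BinHelper.vnEntropy_neg_trace hσ1PSD.1]
    ring
  have htrlin : ((σ * matLog σ).trace).re
      = p 0 * ((σ0 * matLog σ).trace).re + p 1 * ((σ1 * matLog σ).trace).re := by
    rw [hσ2, Matrix.add_mul, Matrix.smul_mul, Matrix.smul_mul, Matrix.trace_add,
      Matrix.trace_smul, Matrix.trace_smul, Complex.add_re]
    simp [smul_eq_mul, Complex.mul_re]
  have hid : p 0 * relEntropy σ0 σ + p 1 * relEntropy σ1 σ
      = vnEntropy σ - (p 0 * vnEntropy σ0 + p 1 * vnEntropy σ1) := by
    rw [hrel0, hrel1, BinHelper.vnEntropy_neg_trace hσH, htrlin]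
    ring
  have heq' : p 0 * vnEntropy (ρ2 0) + p 1 * vnEntropy (ρ2 1) = vnEntropy σ := by
    rw [← heq, Fin.sum_univ_two]
  have hzero : p 0 * relEntropy σ0 σ + p 1 * relEntropy σ1 σ = 0 := by
    rw [hid, hS0, hS1, ← heq']
    ring
  have hn0 := hK0.1
  have hn1 := hK1.1
  have hD0 : relEntropy σ0 σ = 0 := by
    have h00 : p 0 * relEntropy σ0 σ = 0 := by
      have h1 : 0 ≤ p 1 * relEntropy σ1 σ := mul_nonneg (hp 1).le hn1
      have h2 : 0 ≤ p 0 * relEntropy σ0 σ := mul_nonneg (hp 0).le hn0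
      linarith
    rcases mul_eq_zero.mp h00 with h | h
    · exact absurd h (hp 0).ne'
    · exact h
  have hD1 : relEntropy σ1 σ = 0 := by
    have h11 : p 1 * relEntropy σ1 σ = 0 := by
      have h1 : 0 ≤ p 1 * relEntropy σ1 σ := mul_nonneg (hp 1).le hn1
      have h2 : 0 ≤ p 0 * relEntropy σ0 σ := mul_nonneg (hp 0).le hn0
      linarith
    rcases mul_eq_zero.mp h11 with h | h
    · exact absurd h (hp 1).ne'
    · exact h
  have h01 : σ0 = σ1 := (hK0.2 hD0).trans (hK1.2 hD1).symm
  refine ⟨(U 1)ᴴ * U 0, ?_, ?_⟩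
  · rw [← Matrix.star_eq_conjTranspose]
    exact mul_mem (Unitary.star_mem (hU 1)) (hU 0)
  · rw [Matrix.conjTranspose_mul, Matrix.conjTranspose_conjTranspose]
    have hstep : (U 1)ᴴ * U 0 * ρ2 0 * ((U 0)ᴴ * U 1)
        = (U 1)ᴴ * (σ0 * U 1) := by
      rw [hσ0def]
      simp only [Matrix.mul_assoc]
    rw [hstep, h01, hσ1def]
    calc (U 1)ᴴ * (U 1 * ρ2 1 * (U 1)ᴴ * U 1)
        = (U 1)ᴴ * (U 1 * (ρ2 1 * ((U 1)ᴴ * U 1))) := by simp only [Matrix.mul_assoc]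
      _ = ρ2 1 := by rw [hUk2 1, Matrix.mul_one, BinHelper.mic (hUk2 1)]
end
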